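/- Define c₁ = √(3 − φ) and c_{n+1} = √(2 + c_n), where φ = (1+√5)/2. Then π = (5/3)·lim_{n→∞} 2^n · √(2 − c_n). -/

import Mathlib

open Filter Topology

theorem pi_phi_two (φ : ℝ) (hφ : φ = (1 + Real.sqrt 5) / 2)
    (c : ℕ → ℝ) (hc1 : c 1 = Real.sqrt (3 - φ))
    (hcrec : ∀ n, 1 ≤ n → c (n + 1) = Real.sqrt (2 + c n)) :
    Filter.Tendsto (fun n : ℕ => (5 / 3 : ℝ) * ((2 : ℝ) ^ n * Real.sqrt (2 - c n)))
      Filter.atTop (nhds Real.pi) := by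
  have pi_pos := Real.pi_pos
  set a : ℝ := 3 * Real.pi / 5 with ha
  have hapos : 0 < a := by positivity
  have halt : a < Real.pi := by rw [ha]; linarith
  -- angles
  set θ : ℕ → ℝ := fun n => a / 2 ^ n with hθ
  have hθpos : ∀ n, 0 < θ n := fun n => by positivity
  have hθle : ∀ n, 1 ≤ n → θ n ≤ Real.pi / 2 := by
    intro n hn
    have h2 : (2:ℝ) ≤ 2 ^ n := by
      calc (2:ℝ) = 2 ^ 1 := (pow_one 2).symm
      _ ≤ 2 ^ n := pow_le_pow_right₀ (by norm_num) hn
    rw [hθ]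
    simp only
    rw [div_le_iff₀ (by positivity)]
    nlinarith [Real.pi_pos]
  -- key formula
  have key : ∀ n, 1 ≤ n → c n = 2 * Real.cos (θ n) := by
    intro n hn
    induction n with
    | zero => omega
    | succ m ih =>
      rcases Nat.eq_or_lt_of_le hn with h1 | h1
      · -- m + 1 = 1
        have hm : m = 0 := by omega
        subst hm
        have hθ1 : θ 1 = Real.pi / 2 - Real.pi / 5 := by
          rw [hθ]; simp only; rw [ha]; ring
        rw [hc1, hθ1, Real.cos_pi_div_two_sub]
        have hs : (0:ℝ) ≤ Real.sin (Real.pi / 5) :=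
          Real.sin_nonneg_of_nonneg_of_le_pi (by positivity) (by linarith)
        have hsq : 3 - φ = (2 * Real.sin (Real.pi / 5)) ^ 2 := by
          have h1 : Real.sin (Real.pi / 5) ^ 2 = 1 - Real.cos (Real.pi / 5) ^ 2 := by
            have := Real.sin_sq_add_cos_sq (Real.pi / 5); linarith
          have h5 : Real.sqrt 5 ^ 2 = 5 := Real.sq_sqrt (by norm_num)
          rw [hφ]
          rw [mul_pow, h1, Real.cos_pi_div_five]
          ring_nf
          nlinarith [h5]
        rw [hsq, Real.sqrt_sq (by linarith)]
      · -- m ≥ 1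
        have hm : 1 ≤ m := by omega
        have hrec := hcrec m hm
        rw [hrec, ih hm]
        have hhalf : θ m / 2 = θ (m + 1) := by
          rw [hθ]; simp only; rw [pow_succ]; ring
        have hcos : 2 + 2 * Real.cos (θ m) = (2 * Real.cos (θ (m + 1))) ^ 2 := by
          have h2x : θ m = 2 * θ (m + 1) := by rw [← hhalf]; ring
          rw [h2x, Real.cos_two_mul]
          ring
        have hnn : (0:ℝ) ≤ Real.cos (θ (m + 1)) := by
          apply Real.cos_nonneg_of_mem_Icc
          constructor
          · linarith [hθpos (m + 1)]
          · exact hθle (m + 1) (by omega)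
        rw [hcos, Real.sqrt_sq (by linarith)]
  -- eventual equality with nicer sequence
  have hx : ∀ n : ℕ, (1:ℕ) ≤ n → (5 / 3 : ℝ) * ((2 : ℝ) ^ n * Real.sqrt (2 - c n))
      = (5 / 3 : ℝ) * (a * (Real.sin (θ (n + 1)) / θ (n + 1))) := by
    intro n hn
    have hsin : Real.sqrt (2 - c n) = 2 * Real.sin (θ (n + 1)) := by
      rw [key n hn]
      have hhalf : θ n / 2 = θ (n + 1) := by
        rw [hθ]; simp only; rw [pow_succ]; ring
      have hsq : 2 - 2 * Real.cos (θ n) = (2 * Real.sin (θ (n + 1))) ^ 2 := by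
        have h2x : θ n = 2 * θ (n + 1) := by rw [← hhalf]; ring
        have hpyth := Real.sin_sq_add_cos_sq (θ (n + 1))
        rw [h2x, Real.cos_two_mul]
        nlinarith [hpyth]
      have hnn : (0:ℝ) ≤ Real.sin (θ (n + 1)) := by
        apply Real.sin_nonneg_of_nonneg_of_le_pi (le_of_lt (hθpos (n + 1)))
        have := hθle (n + 1) (by omega)
        linarith
      rw [hsq, Real.sqrt_sq (by linarith)]
    rw [hsin]
    have hθne : θ (n + 1) ≠ 0 := ne_of_gt (hθpos (n + 1))
    have hval : θ (n + 1) = a / 2 ^ (n + 1) := rfl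
    have h2 : (2:ℝ) ^ (n+1) ≠ 0 := by positivity
    have hane : a ≠ 0 := ne_of_gt hapos
    rw [hval]
    field_simp
    ring
  -- limit of sin x / x
  have hslope : Filter.Tendsto (fun y : ℝ => Real.sin y / y) (𝓝[≠] (0:ℝ)) (𝓝 1) := by
    have h := (Real.hasDerivAt_sin 0)
    rw [Real.cos_zero, hasDerivAt_iff_tendsto_slope] at h
    have : (slope Real.sin 0) = fun y : ℝ => Real.sin y / y := by
      funext y; simp [slope_def_field, div_eq_mul_inv]
    rwa [this] at h
  -- θ (n+1) → 0 within ≠ 0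
  have hθto : Filter.Tendsto (fun n : ℕ => θ (n + 1)) Filter.atTop (𝓝[≠] (0:ℝ)) := by
    apply tendsto_nhdsWithin_of_tendsto_nhds_of_eventually_within
    · have h1 : Filter.Tendsto (fun n : ℕ => ((1:ℝ)/2) ^ (n+1)) Filter.atTop (𝓝 0) :=
        (tendsto_pow_atTop_nhds_zero_of_lt_one (by norm_num) (by norm_num)).comp
          (Filter.tendsto_add_atTop_nat 1)
      have h2 := h1.const_mul a
      rw [mul_zero] at h2
      convert h2 using 2 with n
      rw [hθ]
      simp only
      rw [div_pow, one_pow]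
      ring
    · exact Filter.Eventually.of_forall fun n => ne_of_gt (hθpos (n + 1))
  have hmain : Filter.Tendsto
      (fun n : ℕ => (5 / 3 : ℝ) * (a * (Real.sin (θ (n + 1)) / θ (n + 1))))
      Filter.atTop (𝓝 Real.pi) := by
    have h := ((hslope.comp hθto).const_mul a).const_mul (5/3 : ℝ)
    have : (5/3 : ℝ) * (a * 1) = Real.pi := by rw [ha]; ring
    rwa [this] at h
  apply hmain.congr'
  filter_upwards [Filter.eventually_ge_atTop 1] with n hn
  exact (hx n hn).symm
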